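/- Let X be a finite abelian group and ξ_1,…,ξ_n (n ≥ 2) independent X-valued random variables with distributions μ_i such that all characteristic functions μ̂_i are nonnegative. Let α_{ij} ∈ Aut(X) with α_{1j} = α_{i1} = Id, and suppose that for some index k no proper subgroup of X contains the support of μ_k. If the linear forms L_j = Σ_{i=1}^n α_{ij} ξ_i, j = 1,…,n, are independent, then μ_i = m_X (the uniform distribution on X) for every i = 1,…,n. -/

import Mathlib

/-- A probability distribution on a finite set, given by its mass function. -/
def IsDist {X : Type*} [Fintype X] (μ : X → ℝ) : Prop :=
  (∀ x, 0 ≤ μ x) ∧ ∑ x, μ x = 1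

/-- The characteristic function `μ̂(y) = ∑_x (x,y) μ({x})` of a distribution `μ`
on a finite abelian group `X`, where `y` is a character of `X`. -/
noncomputable def charFun {X : Type*} [AddCommGroup X] [Fintype X]
    (μ : X → ℝ) (y : AddChar X ℂ) : ℂ :=
  ∑ x, (μ x : ℂ) * y x

/-- The Haar (uniform) distribution `m_K` on a subgroup `K` of `X`. -/
noncomputable def haarDist {X : Type*} [AddCommGroup X] [Fintype X]
    (K : AddSubgroup X) : X → ℝ :=
  (K : Set X).indicator fun _ => ((Nat.card K : ℝ))⁻¹

/-- The degenerate distribution `E_{x₀}` concentrated at `x₀`. -/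
def diracDist {X : Type*} [DecidableEq X] (x₀ : X) : X → ℝ :=
  fun x => if x = x₀ then 1 else 0

/-- Convolution of two distributions on a finite abelian group. -/
noncomputable def convDist {X : Type*} [AddCommGroup X] [Fintype X]
    (μ ν : X → ℝ) : X → ℝ :=
  fun x => ∑ t, μ t * ν (x - t)

/-- `μ` is an idempotent distribution: a shift of the Haar distribution on a subgroup. -/
noncomputable def IsIdempotent {X : Type*} [AddCommGroup X] [Fintype X] [DecidableEq X]
    (μ : X → ℝ) : Prop :=
  ∃ (K : AddSubgroup X) (x₀ : X), μ = convDist (haarDist K) (diracDist x₀)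

/-- The linear forms `L_j = ∑_i A i j (ξ i)`, `j = 1,…,k`, of independent random
variables `ξ i` with distributions `μ i` are independent: the joint distribution of
`(L_1, …, L_k)` equals the product of the marginal distributions. -/
def FormsIndep {X : Type*} [AddCommGroup X] [Fintype X] [DecidableEq X] {n k : ℕ}
    (μ : Fin n → X → ℝ) (A : Fin n → Fin k → X → X) : Prop :=
  ∀ x : Fin k → X,
    (∑ t : Fin n → X, if (∀ j, ∑ i, A i j (t i) = x j) then ∏ i, μ i (t i) else 0) =
    ∏ j, ∑ t : Fin n → X, if (∑ i, A i j (t i) = x j) then ∏ i, μ i (t i) else 0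

/-- The adjoint `α̃` of an endomorphism `α` of `X`, acting on the character group:
`(α x, y) = (x, α̃ y)`. -/
noncomputable def adjChar {X : Type*} [AddCommGroup X] (α : X →+ X)
    (y : AddChar X ℂ) : AddChar X ℂ :=
  y.compAddMonoidHom α

open Finset

section AuxLemmas


lemma my_prod_le_single {ι : Type*} [DecidableEq ι] (s : Finset ι) (g : ι → ℝ)
    (h0 : ∀ i ∈ s, 0 ≤ g i) (h1 : ∀ i ∈ s, g i ≤ 1) {i : ι} (hi : i ∈ s) :
    ∏ j ∈ s, g j ≤ g i := by
  rw [← Finset.mul_prod_erase s g hi]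
  calc g i * ∏ j ∈ s.erase i, g j ≤ g i * 1 := by
        refine mul_le_mul_of_nonneg_left ?_ (h0 i hi)
        exact Finset.prod_le_one (fun j hj => h0 j (Finset.mem_of_mem_erase hj))
          (fun j hj => h1 j (Finset.mem_of_mem_erase hj))
    _ = g i := mul_one _

lemma my_prod_eq_one {ι : Type*} [DecidableEq ι] (s : Finset ι) (g : ι → ℝ)
    (h0 : ∀ i ∈ s, 0 ≤ g i) (h1 : ∀ i ∈ s, g i ≤ 1)
    (hp : ∏ j ∈ s, g j = 1) : ∀ i ∈ s, g i = 1 := by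
  intro i hi
  have h := my_prod_le_single s g h0 h1 hi
  rw [hp] at h
  exact le_antisymm (h1 i hi) h

lemma addChar_map_sum {X : Type*} [AddCommGroup X] {ι : Type*} (y : AddChar X ℂ)
    (s : Finset ι) (g : ι → X) :
    y (∑ i ∈ s, g i) = ∏ i ∈ s, y (g i) := by
  induction s using Finset.cons_induction with
  | empty => simp
  | cons a s ha ih => rw [Finset.sum_cons, Finset.prod_cons, y.map_add_eq_mul, ih]

/-- adjoint of an automorphism, as an equiv of the character group -/
def adjE {X : Type*} [AddCommGroup X] (e : X ≃+ X) : AddChar X ℂ ≃ AddChar X ℂ where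
  toFun y := y.compAddMonoidHom e.toAddMonoidHom
  invFun y := y.compAddMonoidHom e.symm.toAddMonoidHom
  left_inv y := by ext x; simp
  right_inv y := by ext x; simp

@[simp] lemma adjE_apply {X : Type*} [AddCommGroup X] (e : X ≃+ X) (y : AddChar X ℂ) (x : X) :
    adjE e y x = y (e x) := rfl

lemma adjE_sub {X : Type*} [AddCommGroup X] (e : X ≃+ X) (y y' : AddChar X ℂ) :
    adjE e (y - y') = adjE e y - adjE e y' := by
  ext x
  simp [AddChar.sub_apply, map_neg]

@[simp] lemma adjE_zero {X : Type*} [AddCommGroup X] (e : X ≃+ X) :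
    adjE e (0 : AddChar X ℂ) = 0 := by
  ext x; simp

lemma adjE_refl {X : Type*} [AddCommGroup X] (y : AddChar X ℂ) :
    adjE (AddEquiv.refl X) y = y := by
  ext x; simp

end AuxLemmas

section Fourier

variable {X : Type*} [AddCommGroup X] [Fintype X] [DecidableEq X]

/-- single-form Fourier computation -/
lemma single_form_fourier {n m : ℕ} (μ : Fin n → X → ℝ) (A : Fin n → Fin m → X ≃+ X)
    (j : Fin m) (ψ : AddChar X ℂ) :
    ∑ v : X, ((∑ t : Fin n → X, if (∑ i, A i j (t i)) = v then ∏ i, μ i (t i) else 0 : ℝ) : ℂ) * ψ v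
      = ∏ i, charFun (μ i) (ψ.compAddMonoidHom (A i j).toAddMonoidHom) := by
  have hcast : ∀ v : X,
      ((∑ t : Fin n → X, if (∑ i, A i j (t i)) = v then ∏ i, μ i (t i) else 0 : ℝ) : ℂ)
      = ∑ t : Fin n → X, if (∑ i, A i j (t i)) = v then ∏ i, ((μ i (t i) : ℂ)) else 0 := by
    intro v
    push_cast [apply_ite ((↑) : ℝ → ℂ)]
    rfl
  calc ∑ v : X, ((∑ t : Fin n → X, if (∑ i, A i j (t i)) = v then ∏ i, μ i (t i) else 0 : ℝ) : ℂ) * ψ v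
      = ∑ v : X, ∑ t : Fin n → X,
          (if (∑ i, A i j (t i)) = v then ∏ i, ((μ i (t i) : ℂ)) else 0) * ψ v := by
        refine Finset.sum_congr rfl fun v _ => ?_
        rw [hcast, Finset.sum_mul]
    _ = ∑ t : Fin n → X, ∑ v : X,
          (if (∑ i, A i j (t i)) = v then ∏ i, ((μ i (t i) : ℂ)) else 0) * ψ v := Finset.sum_comm
    _ = ∑ t : Fin n → X, (∏ i, ((μ i (t i) : ℂ))) * ψ (∑ i, A i j (t i)) := by
        refine Finset.sum_congr rfl fun t _ => ?_
        simp only [ite_mul, zero_mul]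
        rw [Finset.sum_ite_eq univ (∑ i, A i j (t i)) (fun v => (∏ i, ((μ i (t i) : ℂ))) * ψ v)]
        simp
    _ = ∑ t : Fin n → X, ∏ i, ((μ i (t i) : ℂ)) * ψ (A i j (t i)) := by
        refine Finset.sum_congr rfl fun t _ => ?_
        rw [addChar_map_sum, Finset.prod_mul_distrib]
    _ = ∏ i, ∑ x : X, ((μ i x : ℂ)) * ψ (A i j x) := by
        rw [Finset.prod_univ_sum]
        rw [Fintype.piFinset_univ]
    _ = ∏ i, charFun (μ i) (ψ.compAddMonoidHom (A i j).toAddMonoidHom) := rfl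

end Fourier

section Fourier2
variable {X : Type*} [AddCommGroup X] [Fintype X] [DecidableEq X]

lemma fourier_of_formsIndep {n m : ℕ} (μ : Fin n → X → ℝ) (A : Fin n → Fin m → X ≃+ X)
    (hindep : FormsIndep μ fun i j => ⇑(A i j)) (y : Fin m → AddChar X ℂ) :
    ∏ i, charFun (μ i) (∑ j, (y j).compAddMonoidHom (A i j).toAddMonoidHom) =
    ∏ j, ∏ i, charFun (μ i) ((y j).compAddMonoidHom (A i j).toAddMonoidHom) := by
  have hLHS : ∏ i, charFun (μ i) (∑ j, (y j).compAddMonoidHom (A i j).toAddMonoidHom)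
      = ∑ t : Fin n → X, (∏ i, ((μ i (t i) : ℂ))) * ∏ j, (y j) (∑ i, A i j (t i)) := by
    calc ∏ i, charFun (μ i) (∑ j, (y j).compAddMonoidHom (A i j).toAddMonoidHom)
        = ∏ i, ∑ x : X, ((μ i x : ℂ)) * (∑ j, (y j).compAddMonoidHom (A i j).toAddMonoidHom) x := rfl
      _ = ∑ t : Fin n → X, ∏ i, ((μ i (t i) : ℂ)) * (∑ j, (y j).compAddMonoidHom (A i j).toAddMonoidHom) (t i) := by
          rw [Finset.prod_univ_sum, Fintype.piFinset_univ]
      _ = ∑ t : Fin n → X, (∏ i, ((μ i (t i) : ℂ))) * ∏ j, (y j) (∑ i, A i j (t i)) := by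
          refine Finset.sum_congr rfl fun t _ => ?_
          rw [Finset.prod_mul_distrib]
          congr 1
          calc ∏ i, (∑ j, (y j).compAddMonoidHom (A i j).toAddMonoidHom) (t i)
              = ∏ i, ∏ j, (y j) (A i j (t i)) := by
                refine Finset.prod_congr rfl fun i _ => ?_
                rw [AddChar.sum_apply]
                rfl
            _ = ∏ j, ∏ i, (y j) (A i j (t i)) := Finset.prod_comm
            _ = ∏ j, (y j) (∑ i, A i j (t i)) := by
                exact Finset.prod_congr rfl fun j _ => (addChar_map_sum _ _ _).symm
  -- joint mass identity
  have hjoint : ∑ t : Fin n → X, (∏ i, ((μ i (t i) : ℂ))) * ∏ j, (y j) (∑ i, A i j (t i))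
      = ∑ x : Fin m → X,
          ((∑ t : Fin n → X, if (∀ j, ∑ i, A i j (t i) = x j) then ∏ i, μ i (t i) else 0 : ℝ) : ℂ)
            * ∏ j, (y j) (x j) := by
    have hcast : ∀ x : Fin m → X,
        ((∑ t : Fin n → X, if (∀ j, ∑ i, A i j (t i) = x j) then ∏ i, μ i (t i) else 0 : ℝ) : ℂ)
        = ∑ t : Fin n → X, if (∀ j, ∑ i, A i j (t i) = x j) then ∏ i, ((μ i (t i) : ℂ)) else 0 := by
      intro x
      push_cast [apply_ite ((↑) : ℝ → ℂ)]
      rfl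
    symm
    calc ∑ x : Fin m → X,
        ((∑ t : Fin n → X, if (∀ j, ∑ i, A i j (t i) = x j) then ∏ i, μ i (t i) else 0 : ℝ) : ℂ)
          * ∏ j, (y j) (x j)
        = ∑ x : Fin m → X, ∑ t : Fin n → X,
            (if (∀ j, ∑ i, A i j (t i) = x j) then ∏ i, ((μ i (t i) : ℂ)) else 0) * ∏ j, (y j) (x j) := by
          refine Finset.sum_congr rfl fun x _ => ?_
          rw [hcast, Finset.sum_mul]
      _ = ∑ t : Fin n → X, ∑ x : Fin m → X,
            (if (∀ j, ∑ i, A i j (t i) = x j) then ∏ i, ((μ i (t i) : ℂ)) else 0) * ∏ j, (y j) (x j) :=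
          Finset.sum_comm
      _ = ∑ t : Fin n → X, (∏ i, ((μ i (t i) : ℂ))) * ∏ j, (y j) (∑ i, A i j (t i)) := by
          refine Finset.sum_congr rfl fun t _ => ?_
          simp only [ite_mul, zero_mul]
          have hcond : ∀ x : Fin m → X,
              (∀ j, ∑ i, A i j (t i) = x j) ↔ (fun j => ∑ i, A i j (t i)) = x := by
            intro x; rw [funext_iff]
          simp only [hcond]
          rw [Finset.sum_ite_eq univ (fun j => ∑ i, A i j (t i))
            (fun x => (∏ i, ((μ i (t i) : ℂ))) * ∏ j, (y j) (x j))]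
          simp
  -- apply independence
  have hmid : ∑ x : Fin m → X,
      ((∑ t : Fin n → X, if (∀ j, ∑ i, A i j (t i) = x j) then ∏ i, μ i (t i) else 0 : ℝ) : ℂ)
        * ∏ j, (y j) (x j)
      = ∑ x : Fin m → X,
        ((∏ j, ∑ t : Fin n → X, if (∑ i, A i j (t i) = x j) then ∏ i, μ i (t i) else 0 : ℝ) : ℂ)
          * ∏ j, (y j) (x j) := by
    refine Finset.sum_congr rfl fun x _ => ?_
    rw [hindep x]
  -- factor the RHS
  have hRHS : ∑ x : Fin m → X,
      ((∏ j, ∑ t : Fin n → X, if (∑ i, A i j (t i) = x j) then ∏ i, μ i (t i) else 0 : ℝ) : ℂ)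
        * ∏ j, (y j) (x j)
      = ∏ j, ∑ v : X,
          ((∑ t : Fin n → X, if (∑ i, A i j (t i)) = v then ∏ i, μ i (t i) else 0 : ℝ) : ℂ) * (y j) v := by
    rw [Finset.prod_univ_sum, Fintype.piFinset_univ]
    refine Finset.sum_congr rfl fun x _ => ?_
    push_cast
    rw [Finset.prod_mul_distrib]
  rw [hLHS, hjoint, hmid, hRHS]
  exact Finset.prod_congr rfl fun j _ => single_form_fourier μ A j (y j)

end Fourier2

section Main

open Finset

variable {X : Type*} [AddCommGroup X] [Fintype X] [DecidableEq X]

lemma charFun_zero_char {μ : X → ℝ} (hμ : IsDist μ) : charFun μ (0 : AddChar X ℂ) = 1 := by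
  unfold charFun
  simp only [AddChar.zero_apply, mul_one]
  rw [← Complex.ofReal_sum, hμ.2, Complex.ofReal_one]

lemma charFun_norm_le {μ : X → ℝ} (hμ : IsDist μ) (y : AddChar X ℂ) : ‖charFun μ y‖ ≤ 1 := by
  unfold charFun
  calc ‖∑ x, (μ x : ℂ) * y x‖ ≤ ∑ x, ‖(μ x : ℂ) * y x‖ := norm_sum_le _ _
    _ = ∑ x, μ x := by
        refine Finset.sum_congr rfl fun x _ => ?_
        rw [norm_mul, AddChar.norm_apply, mul_one, Complex.norm_real,
          Real.norm_of_nonneg (hμ.1 x)]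
    _ = 1 := hμ.2

lemma char_eq_one_imp {μ : X → ℝ} (hμ : IsDist μ)
    (hsupp : ∀ K : AddSubgroup X, {x | μ x ≠ 0} ⊆ (K : Set X) → K = ⊤)
    {y : AddChar X ℂ} (h : charFun μ y = 1) : y = 0 := by
  have hre1 : ∀ x : X, (y x).re ≤ 1 := by
    intro x
    have h1 : |(y x).re| ≤ ‖y x‖ := Complex.abs_re_le_norm _
    have h2 : ‖y x‖ = 1 := by
      exact AddChar.norm_apply _ _
    rw [h2] at h1
    exact (abs_le.mp h1).2
  have hsum0 : ∑ x, μ x * (1 - (y x).re) = 0 := by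
    have hre : (charFun μ y).re = ∑ x, μ x * (y x).re := by
      unfold charFun
      rw [Complex.re_sum]
      exact Finset.sum_congr rfl fun x _ => Complex.re_ofReal_mul _ _
    have : ∑ x, μ x * (y x).re = 1 := by rw [← hre, h]; simp
    simp only [mul_sub, Finset.sum_sub_distrib, mul_one, hμ.2, this, sub_self]
  have hzero : ∀ x ∈ univ, μ x * (1 - (y x).re) = 0 := by
    rw [← Finset.sum_eq_zero_iff_of_nonneg]
    · exact hsum0
    · intro x _
      exact mul_nonneg (hμ.1 x) (by linarith [hre1 x])
  have hy1 : ∀ x : X, μ x ≠ 0 → y x = 1 := by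
    intro x hx
    have h1 : 1 - (y x).re = 0 := by
      have := hzero x (mem_univ x)
      rcases mul_eq_zero.mp this with h | h
      · exact absurd h hx
      · exact h
    have hrex : (y x).re = 1 := by linarith
    have hnorm : ‖y x‖ = 1 := AddChar.norm_apply _ _
    have hsq : Complex.normSq (y x) = 1 := by
      have := Complex.normSq_eq_norm_sq (y x)
      rw [hnorm] at this
      simpa using this
    have him : (y x).im = 0 := by
      have h3 := Complex.normSq_apply (y x)
      rw [hsq, hrex] at h3
      nlinarith [h3]
    apply Complex.ext <;> simp [hrex, him]
  set K : AddSubgroup X :=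
    { carrier := {x | y x = 1}
      zero_mem' := by simp
      add_mem' := fun {a b} ha hb => by
        simp only [Set.mem_setOf_eq] at *
        rw [y.map_add_eq_mul, ha, hb, mul_one]
      neg_mem' := fun {a} ha => by
        simp only [Set.mem_setOf_eq] at *
        rw [y.map_neg_eq_inv, ha, inv_one] } with hK
  have hKtop : K = ⊤ := hsupp K (fun x hx => hy1 x hx)
  have hall : ∀ x : X, y x = 1 := by
    intro x
    have : x ∈ K := hKtop ▸ AddSubgroup.mem_top x
    exact this
  exact AddChar.eq_zero_iff.mpr hall

end Main

open Finset in
set_option maxHeartbeats 2000000 in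
open ComplexOrder in
/-- Lemma 4: independent `ξ_i` with nonnegative characteristic
functions, `α_{ij} ∈ Aut(X)`, `α_{1j} = α_{i1} = Id`, and for some `k` no proper
subgroup of `X` contains the support of `μ_k`; if the forms `L_j = ∑_i α_{ij} ξ_i`
are independent then every `μ_i` is the Haar distribution `m_X`. -/
theorem stmt10 {X : Type*} [AddCommGroup X] [Fintype X] [DecidableEq X]
    (n : ℕ) (hn : 2 ≤ n)
    (μ : Fin n → X → ℝ) (hμ : ∀ i, IsDist (μ i))
    (hpos : ∀ i y, 0 ≤ charFun (μ i) y)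
    (α : Fin n → Fin n → (X ≃+ X))
    (hα1 : ∀ j, α ⟨0, by omega⟩ j = AddEquiv.refl X)
    (hα2 : ∀ i, α i ⟨0, by omega⟩ = AddEquiv.refl X)
    (hsupp : ∃ k, ∀ K : AddSubgroup X, {x | μ k x ≠ 0} ⊆ (K : Set X) → K = ⊤)
    (hindep : FormsIndep μ (fun i j => ⇑(α i j))) :
    ∀ i, μ i = haarDist (⊤ : AddSubgroup X) := by
  classical
  obtain ⟨k, hk⟩ := hsupp
  have hn0 : 0 < n := by omega
  set i0 : Fin n := ⟨0, hn0⟩ with hi0def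
  -- real-valued characteristic functions
  set F : Fin n → AddChar X ℂ → ℝ := fun i y => (charFun (μ i) y).re with hFdef
  have hre : ∀ i y, charFun (μ i) y = ((F i y : ℝ) : ℂ) := by
    intro i y
    have h := hpos i y
    rw [Complex.le_def] at h
    apply Complex.ext
    · simp [hFdef]
    · simp only [hFdef, Complex.ofReal_im]
      exact h.2.symm
  have hF0 : ∀ i y, 0 ≤ F i y := by
    intro i y
    have h := hpos i y
    rw [Complex.le_def] at h
    simpa using h.1
  have hF1 : ∀ i y, F i y ≤ 1 := by
    intro i y
    have h := charFun_norm_le (hμ i) y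
    rw [hre i y, Complex.norm_real] at h
    exact (abs_le.mp h).2
  have hFz : ∀ i, F i 0 = 1 := by
    intro i
    simp [hFdef, charFun_zero_char (hμ i)]
  have hFone : ∀ y, F k y = 1 → y = 0 := by
    intro y hy
    apply char_eq_one_imp (hμ k) hk
    rw [hre k y, hy]
    norm_num
  -- the real Fourier identity
  have hFour : ∀ u : Fin n → AddChar X ℂ,
      ∏ i, F i (∑ j, adjE (α i j) (u j)) = ∏ j, ∏ i, F i (adjE (α i j) (u j)) := by
    intro u
    have h := fourier_of_formsIndep μ α hindep u
    have hC : ((∏ i, F i (∑ j, adjE (α i j) (u j)) : ℝ) : ℂ)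
        = ((∏ j, ∏ i, F i (adjE (α i j) (u j)) : ℝ) : ℂ) := by
      push_cast
      calc ∏ i, ((F i (∑ j, adjE (α i j) (u j)) : ℝ) : ℂ)
          = ∏ i, charFun (μ i) (∑ j, (u j).compAddMonoidHom (α i j).toAddMonoidHom) := by
            refine Finset.prod_congr rfl fun i _ => ?_
            exact (hre i _).symm
        _ = ∏ j, ∏ i, charFun (μ i) ((u j).compAddMonoidHom (α i j).toAddMonoidHom) := h
        _ = ∏ j, ∏ i, ((F i (adjE (α i j) (u j)) : ℝ) : ℂ) := by
            refine Finset.prod_congr rfl fun j _ => Finset.prod_congr rfl fun i _ => ?_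
            exact hre i _
    exact_mod_cast hC
  -- the matrix of adjoints is injective on tuples of characters
  set B : (Fin n → AddChar X ℂ) → (Fin n → AddChar X ℂ) :=
    fun u => fun i => ∑ j, adjE (α i j) (u j) with hBdef
  have hBsub : ∀ u u', B (u - u') = B u - B u' := by
    intro u u'
    funext i
    simp only [hBdef, Pi.sub_apply]
    rw [← Finset.sum_sub_distrib]
    exact Finset.sum_congr rfl fun j _ => adjE_sub _ _ _
  have hBinj : Function.Injective B := by
    intro u u' huu
    have hz : B (u - u') = 0 := by rw [hBsub, huu, sub_self]
    have hcol : ∀ j, (u - u') j = 0 := by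
      have h1 : ∏ j, ∏ i, F i (adjE (α i j) ((u - u') j)) = 1 := by
        rw [← hFour (u - u')]
        have hzi : ∀ i : Fin n, (∑ j, adjE (α i j) ((u - u') j)) = 0 := fun i => congrFun hz i
        calc ∏ i, F i (∑ j, adjE (α i j) ((u - u') j))
            = ∏ i : Fin n, (1 : ℝ) := by
              refine Finset.prod_congr rfl fun i _ => ?_
              rw [hzi i, hFz]
          _ = 1 := Finset.prod_const_one
      have h2 : ∀ j ∈ univ, (∏ i, F i (adjE (α i j) ((u - u') j))) = 1 :=
        my_prod_eq_one univ _ (fun j _ => Finset.prod_nonneg fun i _ => hF0 i _)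
          (fun j _ => Finset.prod_le_one (fun i _ => hF0 i _) (fun i _ => hF1 i _)) h1
      intro j
      have h3 := my_prod_eq_one univ _ (fun i _ => hF0 i _) (fun i _ => hF1 i _)
        (h2 j (mem_univ j)) k (mem_univ k)
      have h4 : adjE (α k j) ((u - u') j) = 0 := hFone _ h3
      have h5 : adjE (α k j) ((u - u') j) = adjE (α k j) 0 := by rw [h4, adjE_zero]
      exact (adjE (α k j)).injective h5
    have : u - u' = 0 := funext hcol
    exact sub_eq_zero.mp this
  have hBbij : Function.Bijective B := Finite.injective_iff_bijective.mp hBinj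
  -- sums over the character group
  set S : Fin n → ℝ := fun i => ∑ y : AddChar X ℂ, F i y with hSdef
  set T : Fin n → ℝ := fun j => ∑ y : AddChar X ℂ, ∏ i, F i (adjE (α i j) y) with hTdef
  have hM : ∏ i, S i = ∏ j, T j := by
    calc ∏ i, S i = ∑ w : Fin n → AddChar X ℂ, ∏ i, F i (w i) := by
          simp only [hSdef]
          rw [Finset.prod_univ_sum, Fintype.piFinset_univ]
      _ = ∑ u : Fin n → AddChar X ℂ, ∏ i, F i (B u i) :=
          (Fintype.sum_bijective B hBbij _ _ (fun u => rfl)).symm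
      _ = ∑ u : Fin n → AddChar X ℂ, ∏ j, ∏ i, F i (adjE (α i j) (u j)) :=
          Finset.sum_congr rfl fun u _ => hFour u
      _ = ∏ j, ∑ y : AddChar X ℂ, ∏ i, F i (adjE (α i j) y) := by
          rw [Finset.prod_univ_sum, Fintype.piFinset_univ]
      _ = ∏ j, T j := rfl
  have hTS : ∀ j m', T j ≤ S m' := by
    intro j m'
    simp only [hTdef, hSdef]
    calc ∑ y : AddChar X ℂ, ∏ i, F i (adjE (α i j) y)
        ≤ ∑ y : AddChar X ℂ, F m' (adjE (α m' j) y) := by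
          refine Finset.sum_le_sum fun y _ => ?_
          exact my_prod_le_single univ _ (fun i _ => hF0 i _) (fun i _ => hF1 i _) (mem_univ m')
      _ = ∑ y : AddChar X ℂ, F m' y :=
          Fintype.sum_bijective (adjE (α m' j)) (adjE (α m' j)).bijective _ _ (fun y => rfl)
  have hT1 : ∀ j, (1:ℝ) ≤ T j := by
    intro j
    simp only [hTdef]
    have hzero : ∏ i, F i (adjE (α i j) (0 : AddChar X ℂ)) = 1 := by
      calc ∏ i, F i (adjE (α i j) (0 : AddChar X ℂ)) = ∏ i : Fin n, (1:ℝ) := by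
            refine Finset.prod_congr rfl fun i _ => ?_
            rw [adjE_zero, hFz]
        _ = 1 := Finset.prod_const_one
    calc (1:ℝ) = ∏ i, F i (adjE (α i j) (0 : AddChar X ℂ)) := hzero.symm
      _ ≤ ∑ y : AddChar X ℂ, ∏ i, F i (adjE (α i j) y) :=
          Finset.single_le_sum (f := fun y : AddChar X ℂ => ∏ i, F i (adjE (α i j) y))
            (fun y _ => Finset.prod_nonneg fun i _ => hF0 i _)
            (Finset.mem_univ (0 : AddChar X ℂ))
  have hS1 : ∀ i, (1:ℝ) ≤ S i := by
    intro i
    simp only [hSdef]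
    calc (1:ℝ) = F i 0 := (hFz i).symm
      _ ≤ ∑ y : AddChar X ℂ, F i y :=
          Finset.single_le_sum (f := fun y : AddChar X ℂ => F i y)
            (fun y _ => hF0 i y) (Finset.mem_univ (0 : AddChar X ℂ))
  -- extremal argument
  obtain ⟨m0, -, hm0⟩ := Finset.exists_min_image univ S ⟨i0, Finset.mem_univ i0⟩
  set c := S m0 with hcdef
  have hc1 : (1:ℝ) ≤ c := hS1 m0
  have hTc : ∀ j, T j ≤ c := fun j => hTS j m0
  have hPT : ∏ j, T j = c ^ n := by
    have hub : ∏ j, T j ≤ c ^ n := by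
      calc ∏ j : Fin n, T j ≤ ∏ _j : Fin n, c :=
            Finset.prod_le_prod (fun j _ => le_trans zero_le_one (hT1 j)) (fun j _ => hTc j)
        _ = c ^ n := by rw [Finset.prod_const, Finset.card_univ, Fintype.card_fin]
    have hlb : c ^ n ≤ ∏ j, T j := by
      rw [← hM]
      calc c ^ n = ∏ _i : Fin n, c := by rw [Finset.prod_const, Finset.card_univ, Fintype.card_fin]
        _ ≤ ∏ i, S i :=
            Finset.prod_le_prod (fun i _ => le_trans zero_le_one hc1)
              (fun i _ => hm0 i (mem_univ i))
    exact le_antisymm hub hlb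
  have hPS : ∏ i, S i = c ^ n := by rw [hM, hPT]
  have hTeq : ∀ j, T j = c := by
    intro j
    by_contra hne
    have hlt : T j < c := lt_of_le_of_ne (hTc j) hne
    have hstrict : ∏ j' : Fin n, T j' < ∏ _j' : Fin n, c :=
      Finset.prod_lt_prod (fun j' _ => lt_of_lt_of_le zero_lt_one (hT1 j'))
        (fun j' _ => hTc j') ⟨j, mem_univ j, hlt⟩
    rw [Finset.prod_const, Finset.card_univ, Fintype.card_fin, hPT] at hstrict
    exact lt_irrefl _ hstrict
  have hSeq : ∀ i, S i = c := by
    intro i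
    by_contra hne
    have hlt : c < S i := lt_of_le_of_ne (hm0 i (mem_univ i)) (Ne.symm hne)
    have hstrict : ∏ _i' : Fin n, c < ∏ i', S i' :=
      Finset.prod_lt_prod (fun _ _ => lt_of_lt_of_le zero_lt_one hc1)
        (fun i' _ => hm0 i' (mem_univ i')) ⟨i, mem_univ i, hlt⟩
    rw [Finset.prod_const, Finset.card_univ, Fintype.card_fin, hPS] at hstrict
    exact lt_irrefl _ hstrict
  -- pointwise identification
  have hTi0 : T i0 = ∑ y : AddChar X ℂ, ∏ i, F i y := by
    simp only [hTdef]
    refine Finset.sum_congr rfl fun y _ => Finset.prod_congr rfl fun i _ => ?_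
    rw [hα2 i, adjE_refl]
  have hpoint : ∀ m y, ∏ i, F i y = F m y := by
    intro m
    have hsum : ∑ y : AddChar X ℂ, ∏ i, F i y = ∑ y : AddChar X ℂ, F m y := by
      calc ∑ y : AddChar X ℂ, ∏ i, F i y = T i0 := hTi0.symm
        _ = c := hTeq i0
        _ = S m := (hSeq m).symm
        _ = ∑ y : AddChar X ℂ, F m y := by simp only [hSdef]
    have hle : ∀ y ∈ (univ : Finset (AddChar X ℂ)), ∏ i, F i y ≤ F m y :=
      fun y _ => my_prod_le_single univ _ (fun i _ => hF0 i _) (fun i _ => hF1 i _) (mem_univ m)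
    intro y
    exact (Finset.sum_eq_sum_iff_of_le hle).mp hsum y (mem_univ y)
  -- values are 0 or 1, and vanish off 0
  have h01 : ∀ y : AddChar X ℂ, y ≠ 0 → ∀ m, F m y = 0 := by
    intro y hy m
    rcases eq_or_ne (∏ i, F i y) 0 with h0 | hne
    · rw [← hpoint m y, h0]
    · exfalso
      have hsplit : ∏ i, F i y = F i0 y * ∏ i ∈ univ.erase i0, F i y :=
        (Finset.mul_prod_erase univ _ (mem_univ i0)).symm
      have hQ : ∏ i ∈ univ.erase i0, F i y = 1 := by
        have heq : (∏ i, F i y) * 1 = (∏ i, F i y) * ∏ i ∈ univ.erase i0, F i y := by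
          rw [mul_one]
          conv_lhs => rw [hsplit]
          rw [hpoint i0 y]
        exact (mul_left_cancel₀ hne heq).symm
      set i1 : Fin n := ⟨1, by omega⟩ with hi1def
      have hi1 : i1 ∈ univ.erase i0 := by
        rw [Finset.mem_erase]
        refine ⟨?_, mem_univ _⟩
        simp only [hi1def, hi0def, ne_eq, Fin.mk.injEq]
        omega
      have h1 : F i1 y = 1 := my_prod_eq_one _ _ (fun i _ => hF0 i _) (fun i _ => hF1 i _) hQ i1 hi1
      have hP1 : ∏ i, F i y = 1 := by rw [hpoint i1 y]; exact h1
      have hk1 : F k y = 1 := by rw [← hpoint k y, hP1]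
      exact hy (hFone y hk1)
  -- Fourier inversion
  intro m
  funext x
  have hchar : ∀ y : AddChar X ℂ, charFun (μ m) y = if y = 0 then 1 else 0 := by
    intro y
    by_cases h : y = 0
    · simp [h, charFun_zero_char (hμ m)]
    · rw [hre m y, h01 y h m]
      simp [h]
  have hinv : (μ m x : ℂ) * (Fintype.card X : ℂ) = 1 := by
    have h1 : ∑ ψ : AddChar X ℂ, charFun (μ m) ψ * ψ (-x) = 1 := by
      calc ∑ ψ : AddChar X ℂ, charFun (μ m) ψ * ψ (-x)
          = ∑ ψ : AddChar X ℂ, if ψ = 0 then ψ (-x) else 0 := by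
            refine Finset.sum_congr rfl fun ψ _ => ?_
            rw [hchar ψ, ite_mul, one_mul, zero_mul]
        _ = (0 : AddChar X ℂ) (-x) := by
            rw [Finset.sum_ite_eq' univ (0 : AddChar X ℂ) (fun ψ => ψ (-x))]
            simp
        _ = 1 := by simp
    have h2 : ∑ ψ : AddChar X ℂ, charFun (μ m) ψ * ψ (-x)
        = ∑ z : X, (μ m z : ℂ) * ∑ ψ : AddChar X ℂ, ψ (z - x) := by
      unfold charFun
      calc ∑ ψ : AddChar X ℂ, (∑ z : X, (μ m z : ℂ) * ψ z) * ψ (-x)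
          = ∑ ψ : AddChar X ℂ, ∑ z : X, (μ m z : ℂ) * ψ (z - x) := by
            refine Finset.sum_congr rfl fun ψ _ => ?_
            rw [Finset.sum_mul]
            refine Finset.sum_congr rfl fun z _ => ?_
            rw [mul_assoc, ← ψ.map_add_eq_mul, ← sub_eq_add_neg]
        _ = ∑ z : X, ∑ ψ : AddChar X ℂ, (μ m z : ℂ) * ψ (z - x) := Finset.sum_comm
        _ = ∑ z : X, (μ m z : ℂ) * ∑ ψ : AddChar X ℂ, ψ (z - x) := by
            refine Finset.sum_congr rfl fun z _ => ?_
            rw [Finset.mul_sum]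
    have h3 : ∑ z : X, (μ m z : ℂ) * ∑ ψ : AddChar X ℂ, ψ (z - x)
        = (μ m x : ℂ) * (Fintype.card X : ℂ) := by
      calc ∑ z : X, (μ m z : ℂ) * ∑ ψ : AddChar X ℂ, ψ (z - x)
          = ∑ z : X, if z = x then (μ m z : ℂ) * (Fintype.card X : ℂ) else 0 := by
            refine Finset.sum_congr rfl fun z _ => ?_
            rw [AddChar.sum_apply_eq_ite (z - x)]
            rw [mul_ite, mul_zero]
            simp only [sub_eq_zero]
        _ = (μ m x : ℂ) * (Fintype.card X : ℂ) := by
            rw [Finset.sum_ite_eq' univ x (fun z => (μ m z : ℂ) * (Fintype.card X : ℂ))]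
            simp
    rw [← h3, ← h2, h1]
  have hcardR : (Fintype.card X : ℝ) ≠ 0 := Nat.cast_ne_zero.mpr Fintype.card_ne_zero
  have hmx : μ m x * (Fintype.card X : ℝ) = 1 := by exact_mod_cast hinv
  have hval : μ m x = (Fintype.card X : ℝ)⁻¹ := by
    field_simp at hmx ⊢
    linarith
  have hhaar : haarDist (⊤ : AddSubgroup X) x = (Fintype.card X : ℝ)⁻¹ := by
    unfold haarDist
    rw [Set.indicator_of_mem (by simp : x ∈ ((⊤ : AddSubgroup X) : Set X))]
    congr 1
    rw [Nat.card_congr AddSubgroup.topEquiv.toEquiv, Nat.card_eq_fintype_card]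
  rw [hval, hhaar]
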